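/- For the two-qubit state ρ = (1/4)(𝟙⊗𝟙 + 0.4 σ₁⊗𝟙 + 0.4(𝟙⊗σ₁ − 𝟙⊗σ₃) + 0.2 σ₃⊗σ₃): (i) ρ is a positive semidefinite operator of trace 1, hence a valid state; (ii) its correlation rank satisfies L_R(ρ) = 3 > 2, so ρ is superseparable. -/

import Mathlib

open Matrix Kronecker
open scoped BigOperators ComplexOrder

/-- The Pauli basis σ₀ = 𝟙₂, σ₁, σ₂, σ₃. -/
noncomputable def pauli : Fin 4 → Matrix (Fin 2) (Fin 2) ℂ :=
  ![1, !![0, 1; 1, 0], !![0, -Complex.I; Complex.I, 0], !![1, 0; 0, -1]]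

/-- The 4×4 real matrix of coefficients r_{nm} in the Pauli expansion
ρ = Σ_{n,m} r_{nm} σ_n ⊗ σ_m, i.e. r_{nm} = Re tr((σ_n ⊗ σ_m) ρ)/4. -/
noncomputable def pauliCorrMatrix
    (ρ : Matrix (Fin 2 × Fin 2) (Fin 2 × Fin 2) ℂ) : Matrix (Fin 4) (Fin 4) ℝ :=
  Matrix.of fun n m => (((pauli n ⊗ₖ pauli m) * ρ).trace).re / 4

/-- The state ρ = (1/4)(𝟙⊗𝟙 + 0.4 σ₁⊗𝟙 + 0.4(𝟙⊗σ₁ − 𝟙⊗σ₃) + 0.2 σ₃⊗σ₃). -/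
noncomputable def giorgiState : Matrix (Fin 2 × Fin 2) (Fin 2 × Fin 2) ℂ :=
  ((1 : ℂ) / 4) • ((1 : Matrix (Fin 2 × Fin 2) (Fin 2 × Fin 2) ℂ)
    + ((2 : ℂ) / 5) • (pauli 1 ⊗ₖ (1 : Matrix (Fin 2) (Fin 2) ℂ))
    + ((2 : ℂ) / 5) • (((1 : Matrix (Fin 2) (Fin 2) ℂ) ⊗ₖ pauli 1)
        - ((1 : Matrix (Fin 2) (Fin 2) ℂ) ⊗ₖ pauli 3))
    + ((1 : ℂ) / 5) • (pauli 3 ⊗ₖ pauli 3))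

/-- Index map Fin 2 × Fin 2 → Fin 4 (row-major). -/
def idx4 : Fin 2 × Fin 2 → Fin 4 := fun p => ![![0, 1], ![2, 3]] p.1 p.2

/-- The lower-triangular factor in an LDLᴴ decomposition of `giorgiState`. -/
noncomputable def Lmat : Matrix (Fin 2 × Fin 2) (Fin 2 × Fin 2) ℂ :=
  Matrix.of fun p q =>
    (!![(1:ℂ), 0, 0, 0; 1/2, 1, 0, 0; 1/2, -1/5, 1, 0; 0, 2/5, 3, 1]) (idx4 p) (idx4 q)

/-- The diagonal in the LDLᴴ decomposition of `giorgiState`. -/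
noncomputable def dvec : Fin 2 × Fin 2 → ℂ := fun p => ![(1:ℂ)/5, 1/4, 1/25, 0] (idx4 p)

/-- Explicit entries of `giorgiState`. -/
noncomputable def Mexp : Matrix (Fin 2 × Fin 2) (Fin 2 × Fin 2) ℂ :=
  Matrix.of fun p q =>
    (!![(4:ℂ)/20, 2/20, 2/20, 0; 2/20, 6/20, 0, 2/20; 2/20, 0, 2/20, 2/20; 0, 2/20, 2/20, 8/20])
      (idx4 p) (idx4 q)

lemma giorgiState_eq_tab : giorgiState = Mexp := by
  ext ⟨i, j⟩ ⟨k, l⟩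
  fin_cases i <;> fin_cases j <;> fin_cases k <;> fin_cases l <;>
    simp [giorgiState, pauli, Mexp, idx4, Matrix.one_apply, Matrix.kroneckerMap_apply,
      Prod.ext_iff, Matrix.vecHead, Matrix.vecTail] <;>
    norm_num

lemma giorgiState_eq_LDL :
    giorgiState = Lmat * Matrix.diagonal dvec * Lmatᴴ := by
  rw [giorgiState_eq_tab]
  ext ⟨i, j⟩ ⟨k, l⟩
  fin_cases i <;> fin_cases j <;> fin_cases k <;> fin_cases l <;>
    simp [Mexp, pauli, Lmat, dvec, idx4, Matrix.mul_apply, Matrix.diagonal,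
      Fintype.sum_prod_type, Fin.sum_univ_two, Matrix.conjTranspose_apply, Prod.ext_iff,
      Matrix.vecHead, Matrix.vecTail, Complex.conj_ofNat] <;>
    norm_num [Complex.ext_iff]

lemma giorgiState_posSemidef : giorgiState.PosSemidef := by
  rw [giorgiState_eq_LDL]
  refine Matrix.PosSemidef.mul_mul_conjTranspose_same ?_ Lmat
  refine Matrix.posSemidef_diagonal_iff.mpr fun p => ?_
  fin_cases p <;> simp [dvec, idx4] <;> norm_num [Complex.le_def]

lemma giorgiState_trace : giorgiState.trace = 1 := by
  simp [giorgiState, Matrix.trace_kronecker, pauli, Matrix.trace_fin_two_of,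
    Matrix.trace_one]

/-- Explicit value of the correlation matrix of `giorgiState`. -/
noncomputable def Rexp : Matrix (Fin 4) (Fin 4) ℝ :=
  !![1/4, 1/10, 0, -1/10; 1/10, 0, 0, 0; 0, 0, 0, 0; 0, 0, 0, 1/20]

set_option maxHeartbeats 1600000 in
lemma pauliCorr_eq : pauliCorrMatrix giorgiState = Rexp := by
  rw [show pauliCorrMatrix giorgiState = pauliCorrMatrix Mexp by rw [giorgiState_eq_tab]]
  ext n m
  fin_cases n <;> fin_cases m <;>
    simp [pauliCorrMatrix, Mexp, pauli, Rexp, Matrix.trace, Matrix.diag,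
      Matrix.mul_apply, Fintype.sum_prod_type, Fin.sum_univ_two, idx4,
      Matrix.vecHead, Matrix.vecTail,
      Matrix.kroneckerMap_apply, Complex.ext_iff] <;>
    norm_num

lemma rank_Rexp : Rexp.rank = 3 := by
  have hle : Rexp.rank ≤ 3 := by
    have hBC : Rexp = (!![(1:ℝ),0,0;0,1,0;0,0,0;0,0,1] : Matrix (Fin 4) (Fin 3) ℝ) *
        (!![1/4, 1/10, 0, -1/10; 1/10, 0, 0, 0; 0, 0, 0, 1/20] : Matrix (Fin 3) (Fin 4) ℝ) := by
      ext i j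
      fin_cases i <;> fin_cases j <;>
        norm_num [Rexp, Matrix.mul_apply, Fin.sum_univ_succ]
    calc Rexp.rank ≤ (!![1/4, 1/10, 0, -1/10; 1/10, 0, 0, 0; 0, 0, 0, 1/20] :
          Matrix (Fin 3) (Fin 4) ℝ).rank := by
            rw [hBC]; exact Matrix.rank_mul_le_right _ _
      _ ≤ 3 := (Matrix.rank_le_card_height _).trans_eq (Fintype.card_fin 3)
  have hge : 3 ≤ Rexp.rank := by
    set F : Matrix (Fin 3) (Fin 4) ℝ := !![1,0,0,0;0,1,0,0;0,0,0,1]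
    set G : Matrix (Fin 4) (Fin 3) ℝ := !![1,0,0;0,1,0;0,0,0;0,0,1]
    have hS : F * Rexp * G = !![1/4, 1/10, -1/10; 1/10, 0, 0; 0, 0, 1/20] := by
      ext i j
      fin_cases i <;> fin_cases j <;>
        norm_num [Rexp, F, G, Matrix.mul_apply, Fin.sum_univ_succ]
    have hunit : IsUnit (!![(1:ℝ)/4, 1/10, -1/10; 1/10, 0, 0; 0, 0, 1/20] :
        Matrix (Fin 3) (Fin 3) ℝ) := by
      rw [Matrix.isUnit_iff_isUnit_det, isUnit_iff_ne_zero]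
      norm_num [Matrix.det_fin_three, Matrix.vecHead, Matrix.vecTail, Matrix.cons_val_two,
        Matrix.cons_val_one, Matrix.cons_val_zero]
    have h3 : (F * Rexp * G).rank = 3 := by
      rw [hS, Matrix.rank_of_isUnit _ hunit]; simp
    calc (3 : ℕ) = (F * Rexp * G).rank := h3.symm
      _ ≤ (F * Rexp).rank := Matrix.rank_mul_le_left _ _
      _ ≤ Rexp.rank := Matrix.rank_mul_le_right _ _
  omega

/-- the state above is a valid state (positive semidefinite with unit trace)
and has correlation rank L_R = 3 > 2, hence it is superseparable. -/
theorem giorgiState_valid_and_corrRank_three :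
    giorgiState.PosSemidef ∧ giorgiState.trace = 1
    ∧ (pauliCorrMatrix giorgiState).rank = 3
    ∧ 2 < (pauliCorrMatrix giorgiState).rank := by
  refine ⟨giorgiState_posSemidef, giorgiState_trace, ?_, ?_⟩ <;>
    rw [pauliCorr_eq, rank_Rexp]
  norm_num
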